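/- The polytope P(Γ) is combinatorial: it is a 0/1-polytope, and for any two nonadjacent vertices p and q of P(Γ), there exist two other vertices r and s with p + q = r + s (i.e. the midpoint of p and q is the midpoint of two other vertices). -/

import Mathlib

open Set
open scoped Classical

noncomputable section

variable {V : Type*}

/-- Characteristic vector of a set of nodes. -/
def chi (S : Set V) : V → ℝ := S.indicator (fun _ => (1 : ℝ))

/-- The candidate vertex set of the polytope `P(Γ)`. -/
def polyVerts (G : SimpleGraph V) : Set (V → ℝ) :=
  {x | x = chi (∅ : Set V) ∨ (∃ v : V, x = chi {v}) ∨
        (∃ u w : V, G.Adj u w ∧ x = chi {u, w})}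

/-- The polytope `P(Γ)`. -/
def poly (G : SimpleGraph V) : Set (V → ℝ) := convexHull ℝ (polyVerts G)

/-- Two points are adjacent vertices of a convex set `P` when the segment
joining them is a (1-dimensional) face, i.e. an extreme subset of `P`. -/
def AdjVert (P : Set (V → ℝ)) (p q : V → ℝ) : Prop :=
  p ≠ q ∧ IsExtreme ℝ P (segment ℝ p q)

/-- A combinatorial automorphism of `P`: a bijection of the vertex (extreme point)
set of `P` mapping the vertex set of each face onto the vertex set of some face. -/
def IsCombAut (P : Set (V → ℝ)) (σ : (V → ℝ) → (V → ℝ)) : Prop :=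
  Set.BijOn σ (P.extremePoints ℝ) (P.extremePoints ℝ) ∧
  ∀ F : Set (V → ℝ), IsExtreme ℝ P F →
    ∃ F' : Set (V → ℝ), IsExtreme ℝ P F' ∧
      σ '' (F ∩ P.extremePoints ℝ) = F' ∩ P.extremePoints ℝ

/-- An automorphism of the skeleton of `P`: a bijection of the vertex set of `P`
preserving adjacency (in both directions). -/
def IsSkelAut (P : Set (V → ℝ)) (σ : (V → ℝ) → (V → ℝ)) : Prop :=
  Set.BijOn σ (P.extremePoints ℝ) (P.extremePoints ℝ) ∧
  ∀ p ∈ P.extremePoints ℝ, ∀ q ∈ P.extremePoints ℝ,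
    (AdjVert P p q ↔ AdjVert P (σ p) (σ q))

section Aux
variable [Fintype V]

-- basic chi lemmas
lemma chi_apply (S : Set V) (v : V) : chi S v = if v ∈ S then 1 else 0 := by
  simp [chi, Set.indicator_apply]

lemma chi_empty : chi (∅ : Set V) = 0 := by
  funext v; simp [chi]

lemma chi_ne {S T : Set V} (v : V) (hv : v ∈ S) (hv' : v ∉ T) : chi S ≠ chi T := by
  intro h
  have h2 := congrFun h v
  rw [chi_apply, chi_apply, if_pos hv, if_neg hv'] at h2
  norm_num at h2

lemma chi_pair_add {u w : V} (h : u ≠ w) : chi ({u, w} : Set V) = chi {u} + chi {w} := by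
  funext t
  simp only [Pi.add_apply, chi_apply, Set.mem_insert_iff, Set.mem_singleton_iff]
  by_cases h1 : t = u <;> by_cases h2 : t = w <;> simp_all

lemma chi_mem_01 {G : SimpleGraph V} {x : V → ℝ} (hx : x ∈ polyVerts G) (i : V) :
    x i = 0 ∨ x i = 1 := by
  rcases hx with rfl | ⟨v, rfl⟩ | ⟨u, w, _, rfl⟩ <;>
  · rw [chi_apply]; split_ifs <;> simp

-- the linear functional
def lfun [Fintype V] (c : V → ℝ) : (V → ℝ) →ₗ[ℝ] ℝ where
  toFun x := ∑ v, c v * x v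
  map_add' x y := by
    simp only [Pi.add_apply, mul_add, Finset.sum_add_distrib]
  map_smul' r x := by
    simp only [Pi.smul_apply, smul_eq_mul, RingHom.id_apply, Finset.mul_sum]
    exact Finset.sum_congr rfl fun v _ => by ring

variable [Fintype V]

lemma lfun_chi_empty (c : V → ℝ) : lfun c (chi (∅ : Set V)) = 0 := by
  simp [lfun, chi_empty]

lemma lfun_chi_single (c : V → ℝ) (v : V) : lfun c (chi ({v} : Set V)) = c v := by
  simp only [lfun, LinearMap.coe_mk, AddHom.coe_mk, chi_apply, Set.mem_singleton_iff,
    mul_ite, mul_one, mul_zero]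
  rw [Finset.sum_ite_eq' Finset.univ v c]
  simp

lemma lfun_chi_pair (c : V → ℝ) {u w : V} (h : u ≠ w) :
    lfun c (chi ({u, w} : Set V)) = c u + c w := by
  rw [chi_pair_add h, map_add, lfun_chi_single, lfun_chi_single]

-- points of the hull lying on a supporting hyperplane are in the hull of verts on it
lemma face_subset {s : Set (V → ℝ)} {c : V → ℝ} {b : ℝ} (hb : ∀ x ∈ s, lfun c x ≤ b)
    {x : V → ℝ} (hx : x ∈ convexHull ℝ s) (hxb : lfun c x = b) :
    x ∈ convexHull ℝ (s ∩ {y | lfun c y = b}) := by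
  obtain ⟨ι, _, w, z, hw0, hw1, hzs, hxe⟩ := mem_convexHull_iff_exists_fintype.mp hx
  have hsum : ∑ i, w i * (b - lfun c (z i)) = 0 := by
    have hlx : ∑ i, w i * lfun c (z i) = b := by
      rw [← hxb, ← hxe, map_sum]
      exact Finset.sum_congr rfl fun i _ => by rw [map_smul]; rfl
    calc ∑ i, w i * (b - lfun c (z i)) = (∑ i, w i) * b - ∑ i, w i * lfun c (z i) := by
          rw [Finset.sum_mul, ← Finset.sum_sub_distrib]
          exact Finset.sum_congr rfl fun i _ => by ring
      _ = 0 := by rw [hw1, hlx]; ring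
  have hkey : ∀ i, w i ≠ 0 → lfun c (z i) = b := by
    intro i hi
    have h0 := (Finset.sum_eq_zero_iff_of_nonneg (fun i _ =>
      mul_nonneg (hw0 i) (by linarith [hb (z i) (hzs i)]))).mp hsum i (Finset.mem_univ i)
    rcases mul_eq_zero.mp h0 with h | h
    · exact absurd h hi
    · linarith
  set t : Finset ι := Finset.univ.filter (fun i => w i ≠ 0) with ht
  have htsum : ∑ i ∈ t, w i = 1 := by
    rw [ht, Finset.sum_filter_ne_zero, hw1]
  have hxt : x = ∑ i ∈ t, w i • z i := by
    rw [← hxe]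
    refine (Finset.sum_subset (Finset.subset_univ t) ?_).symm
    intro i _ hit
    have : w i = 0 := by
      by_contra h
      exact hit (Finset.mem_filter.mpr ⟨Finset.mem_univ i, h⟩)
    simp [this]
  have : t.centerMass w z ∈ convexHull ℝ (s ∩ {y | lfun c y = b}) := by
    apply Finset.centerMass_mem_convexHull
    · exact fun i _ => hw0 i
    · rw [htsum]; norm_num
    · intro i hi
      have hwi : w i ≠ 0 := (Finset.mem_filter.mp hi).2
      exact ⟨hzs i, hkey i hwi⟩
  rwa [Finset.centerMass_eq_of_sum_1 _ _ htsum, ← hxt] at this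

lemma lfun_le_on_poly {G : SimpleGraph V} {c : V → ℝ} {b : ℝ}
    (hb : ∀ x ∈ polyVerts G, lfun c x ≤ b) {y : V → ℝ} (hy : y ∈ poly G) :
    lfun c y ≤ b := by
  have : poly G ⊆ {y | lfun c y ≤ b} := by
    apply convexHull_min hb
    exact convex_halfSpace_le (lfun c).isLinear b
  exact this hy

lemma adj_of_expose (G : SimpleGraph V) {p q : V → ℝ} (c : V → ℝ) (b : ℝ)
    (hp : p ∈ polyVerts G) (hq : q ∈ polyVerts G) (hne : p ≠ q)
    (hb : ∀ x ∈ polyVerts G, lfun c x ≤ b)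
    (heq : ∀ x ∈ polyVerts G, lfun c x = b → x = p ∨ x = q)
    (hpb : lfun c p = b) (hqb : lfun c q = b) :
    AdjVert (poly G) p q := by
  have hpP : p ∈ poly G := subset_convexHull ℝ _ hp
  have hqP : q ∈ poly G := subset_convexHull ℝ _ hq
  have hseg : segment ℝ p q = {y ∈ poly G | lfun c y = b} := by
    apply Subset.antisymm
    · rintro y ⟨a1, a2, ha1, ha2, hsum, rfl⟩
      refine ⟨(convex_convexHull ℝ _).segment_subset hpP hqP ⟨a1, a2, ha1, ha2, hsum, rfl⟩, ?_⟩
      simp only [mem_setOf_eq, map_add, map_smul, smul_eq_mul, hpb, hqb]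
      rw [← add_mul, hsum, one_mul]
    · rintro y ⟨hyP, hyb⟩
      have := face_subset hb hyP hyb
      have hsub : polyVerts G ∩ {y | lfun c y = b} ⊆ {p, q} := by
        rintro x ⟨hx1, hx2⟩
        exact heq x hx1 hx2
      have := convexHull_mono hsub this
      rwa [convexHull_pair] at this
  refine ⟨hne, ?_, ?_⟩
  · rw [hseg]; exact fun y hy => hy.1
  · intro x₁ hx₁ x₂ hx₂ x hx hxoseg
    rw [hseg] at hx
    obtain ⟨a1, a2, ha1, ha2, hsum, hx12⟩ := hxoseg
    have hl1 : lfun c x₁ ≤ b := lfun_le_on_poly hb hx₁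
    have hl2 : lfun c x₂ ≤ b := lfun_le_on_poly hb hx₂
    have hxb : lfun c x = b := hx.2
    have hlx : a1 * lfun c x₁ + a2 * lfun c x₂ = b := by
      rw [← hxb, ← hx12]; simp [map_add, map_smul]
    have hbb : a1 * b + a2 * b = b := by rw [← add_mul, hsum, one_mul]
    have he1 : lfun c x₁ = b := by nlinarith
    have he2 : lfun c x₂ = b := by nlinarith
    rw [hseg]
    exact ⟨hx₁, he1⟩

lemma AdjVert.symm' {P : Set (V → ℝ)} {p q : V → ℝ} (h : AdjVert P p q) : AdjVert P q p := by
  refine ⟨h.1.symm, ?_⟩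
  rw [segment_symm]
  exact h.2

-- the cube
lemma poly_subset_cube (G : SimpleGraph V) :
    poly G ⊆ {y : V → ℝ | ∀ i, 0 ≤ y i ∧ y i ≤ 1} := by
  apply convexHull_min
  · intro x hx i
    rcases chi_mem_01 hx i with h | h <;> rw [h] <;> norm_num
  · intro x hx y hy a b ha hb hab i
    constructor
    · have := (hx i).1; have := (hy i).1
      have : 0 ≤ a * x i := mul_nonneg ha (hx i).1
      have : 0 ≤ b * y i := mul_nonneg hb (hy i).1
      simp only [Pi.add_apply, Pi.smul_apply, smul_eq_mul]
      linarith
    · have h1 : a * x i ≤ a := by nlinarith [(hx i).2]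
      have h2 : b * y i ≤ b := by nlinarith [(hy i).2]
      simp only [Pi.add_apply, Pi.smul_apply, smul_eq_mul]
      linarith

lemma extremePoints_poly (G : SimpleGraph V) :
    (poly G).extremePoints ℝ = polyVerts G := by
  apply Subset.antisymm extremePoints_convexHull_subset
  intro x hx
  rw [mem_extremePoints]
  refine ⟨subset_convexHull ℝ _ hx, ?_⟩
  intro x₁ h₁ x₂ h₂ hseg
  obtain ⟨a, b, ha, hb, hab, hsum⟩ := hseg
  have key : ∀ i, x₁ i = x i ∧ x₂ i = x i := by
    intro i
    have c1 := poly_subset_cube G h₁ i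
    have c2 := poly_subset_cube G h₂ i
    have hs : a * x₁ i + b * x₂ i = x i := by
      have := congrFun hsum i
      simpa using this
    rcases chi_mem_01 hx i with h | h <;> rw [h] <;> rw [h] at hs <;>
      constructor <;> nlinarith [c1.1, c1.2, c2.1, c2.2, mul_nonneg ha.le c1.1,
        mul_nonneg hb.le c2.1]
  exact ⟨funext fun i => (key i).1, funext fun i => (key i).2⟩

lemma L_empty_single (G : SimpleGraph V) (v : V) :
    AdjVert (poly G) (chi (∅ : Set V)) (chi ({v} : Set V)) := by
  set f : V → ℝ := fun t => if t = v then 0 else -1 with hf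
  have fv : f v = 0 := by rw [hf]; simp
  have fo : ∀ t, t ≠ v → f t = -1 := fun t ht => by rw [hf]; simp [ht]
  have fle : ∀ t, f t ≤ 0 := by
    intro t
    rcases eq_or_ne t v with rfl | h
    · rw [fv]
    · rw [fo t h]; norm_num
  apply adj_of_expose G f 0 (Or.inl rfl) (Or.inr (Or.inl ⟨v, rfl⟩))
  · intro h
    have h2 := congrFun h v
    rw [chi_apply, chi_apply] at h2
    simp at h2
  · rintro x (rfl | ⟨y, rfl⟩ | ⟨x, y, hxy, rfl⟩)
    · rw [lfun_chi_empty]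
    · rw [lfun_chi_single]; exact fle y
    · rw [lfun_chi_pair _ hxy.ne]
      rcases eq_or_ne x v with rfl | hx
      · rw [fv, fo y hxy.ne']; norm_num
      · rw [fo x hx]; linarith [fle y]
  · rintro x (rfl | ⟨y, rfl⟩ | ⟨x, y, hxy, rfl⟩) h
    · exact Or.inl rfl
    · rw [lfun_chi_single] at h
      rcases eq_or_ne y v with rfl | hy
      · exact Or.inr rfl
      · rw [fo y hy] at h; norm_num at h
    · exfalso
      rw [lfun_chi_pair _ hxy.ne] at h
      rcases eq_or_ne x v with rfl | hx
      · rw [fv, fo y hxy.ne'] at h; norm_num at h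
      · rw [fo x hx] at h; linarith [fle y]
  · exact lfun_chi_empty f
  · rw [lfun_chi_single, fv]

lemma L_single_single (G : SimpleGraph V) {u v : V} (huv : u ≠ v) (hn : ¬ G.Adj u v) :
    AdjVert (poly G) (chi ({u} : Set V)) (chi ({v} : Set V)) := by
  set f : V → ℝ := fun t => if t = u ∨ t = v then 1 else -4 with hf
  have fu : f u = 1 := by rw [hf]; simp
  have fv : f v = 1 := by rw [hf]; simp
  have fo : ∀ t, t ≠ u → t ≠ v → f t = -4 := fun t h1 h2 => by
    rw [hf]; simp [h1, h2]
  have fle : ∀ t, f t ≤ 1 := by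
    intro t; rw [hf]; dsimp only; split_ifs <;> norm_num
  have hedge : ∀ x y, G.Adj x y → f x + f y ≤ -3 := by
    intro x y hxy
    rcases eq_or_ne x u with rfl | hxu
    · rcases eq_or_ne y v with rfl | hyv
      · exact absurd hxy hn
      · rw [fu, fo y hxy.ne' hyv]; norm_num
    · rcases eq_or_ne x v with rfl | hxv
      · rcases eq_or_ne y u with rfl | hyu
        · exact absurd hxy.symm hn
        · rw [fv, fo y hyu hxy.ne']; norm_num
      · rw [fo x hxu hxv]; linarith [fle y]
  apply adj_of_expose G f 1 (Or.inr (Or.inl ⟨u, rfl⟩)) (Or.inr (Or.inl ⟨v, rfl⟩))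
  · exact chi_ne u rfl (by simp [huv])
  · rintro x (rfl | ⟨y, rfl⟩ | ⟨x, y, hxy, rfl⟩)
    · rw [lfun_chi_empty]; norm_num
    · rw [lfun_chi_single]; exact fle y
    · rw [lfun_chi_pair _ hxy.ne]; linarith [hedge x y hxy]
  · rintro x (rfl | ⟨y, rfl⟩ | ⟨x, y, hxy, rfl⟩) h
    · rw [lfun_chi_empty] at h; norm_num at h
    · rw [lfun_chi_single] at h
      rcases eq_or_ne y u with rfl | hyu
      · exact Or.inl rfl
      rcases eq_or_ne y v with rfl | hyv
      · exact Or.inr rfl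
      · rw [fo y hyu hyv] at h; norm_num at h
    · rw [lfun_chi_pair _ hxy.ne] at h; linarith [hedge x y hxy]
  · rw [lfun_chi_single, fu]
  · rw [lfun_chi_single, fv]

lemma L_single_inedge (G : SimpleGraph V) {u w : V} (huw : G.Adj u w) :
    AdjVert (poly G) (chi ({u} : Set V)) (chi ({u, w} : Set V)) := by
  have huw' : u ≠ w := huw.ne
  set f : V → ℝ := fun t => if t = u then 2 else if t = w then 0 else -4 with hf
  have fu : f u = 2 := by rw [hf]; simp
  have fw : f w = 0 := by rw [hf]; simp [huw'.symm]
  have fo : ∀ t, t ≠ u → t ≠ w → f t = -4 := fun t h1 h2 => by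
    rw [hf]; simp [h1, h2]
  have fle : ∀ t, f t ≤ 2 := by
    intro t; rw [hf]; dsimp only; split_ifs <;> norm_num
  have hedge : ∀ x y, G.Adj x y → f x + f y ≤ 2 ∧
      (f x + f y = 2 → chi ({x, y} : Set V) = chi ({u, w} : Set V)) := by
    intro x y hxy
    rcases eq_or_ne x u with rfl | hxu
    · rcases eq_or_ne y w with rfl | hyw
      · exact ⟨by rw [fu, fw]; norm_num, fun _ => rfl⟩
      · rw [fu, fo y hxy.ne' hyw]
        exact ⟨by norm_num, fun h => absurd h (by norm_num)⟩
    · rcases eq_or_ne x w with rfl | hxw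
      · rcases eq_or_ne y u with rfl | hyu
        · exact ⟨by rw [fu, fw]; norm_num, fun _ => by rw [Set.pair_comm]⟩
        · rw [fw, fo y hyu hxy.ne']
          exact ⟨by norm_num, fun h => absurd h (by norm_num)⟩
      · rw [fo x hxu hxw]
        constructor
        · linarith [fle y]
        · intro h; exfalso; linarith [fle y]
  apply adj_of_expose G f 2 (Or.inr (Or.inl ⟨u, rfl⟩)) (Or.inr (Or.inr ⟨u, w, huw, rfl⟩))
  · exact (chi_ne w (by simp) (by simp [huw'.symm])).symm
  · rintro x (rfl | ⟨y, rfl⟩ | ⟨x, y, hxy, rfl⟩)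
    · rw [lfun_chi_empty]; norm_num
    · rw [lfun_chi_single]; exact fle y
    · rw [lfun_chi_pair _ hxy.ne]; exact (hedge x y hxy).1
  · rintro x (rfl | ⟨y, rfl⟩ | ⟨x, y, hxy, rfl⟩) h
    · rw [lfun_chi_empty] at h; norm_num at h
    · rw [lfun_chi_single] at h
      rcases eq_or_ne y u with rfl | hyu
      · exact Or.inl rfl
      rcases eq_or_ne y w with rfl | hyw
      · rw [fw] at h; norm_num at h
      · rw [fo y hyu hyw] at h; norm_num at h
    · rw [lfun_chi_pair _ hxy.ne] at h
      exact Or.inr ((hedge x y hxy).2 h)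
  · rw [lfun_chi_single, fu]
  · rw [lfun_chi_pair _ huw', fu, fw]; norm_num

lemma L_single_offedge (G : SimpleGraph V) {v u w : V} (huw : G.Adj u w)
    (hvu : v ≠ u) (hvw : v ≠ w) (h1 : ¬ G.Adj u v) (h2 : ¬ G.Adj v w) :
    AdjVert (poly G) (chi ({v} : Set V)) (chi ({u, w} : Set V)) := by
  have huw' : u ≠ w := huw.ne
  set f : V → ℝ := fun t => if t = v then 2 else if t = u then 1 else if t = w then 1 else -4
    with hf
  have fv : f v = 2 := by rw [hf]; simp
  have fu : f u = 1 := by rw [hf]; simp [hvu.symm]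
  have fw : f w = 1 := by rw [hf]; simp [hvw.symm, huw'.symm]
  have fo : ∀ t, t ≠ v → t ≠ u → t ≠ w → f t = -4 := fun t a b c => by
    rw [hf]; simp [a, b, c]
  have fle : ∀ t, f t ≤ 2 := by
    intro t; rw [hf]; dsimp only; split_ifs <;> norm_num
  have fcases : ∀ t, (t = v ∧ f t = 2) ∨ (t = u ∧ f t = 1) ∨ (t = w ∧ f t = 1) ∨ f t = -4 := by
    intro t
    rcases eq_or_ne t v with h | a
    · exact Or.inl ⟨h, h ▸ fv⟩
    rcases eq_or_ne t u with h | b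
    · exact Or.inr (Or.inl ⟨h, h ▸ fu⟩)
    rcases eq_or_ne t w with h | c
    · exact Or.inr (Or.inr (Or.inl ⟨h, h ▸ fw⟩))
    · exact Or.inr (Or.inr (Or.inr (fo t a b c)))
  have hedge : ∀ x y, G.Adj x y → f x + f y ≤ 2 ∧
      (f x + f y = 2 → chi ({x, y} : Set V) = chi ({u, w} : Set V)) := by
    intro x y hxy
    rcases fcases x with ⟨hx', hx⟩ | ⟨hx', hx⟩ | ⟨hx', hx⟩ | hx <;>
      rcases fcases y with ⟨hy', hy⟩ | ⟨hy', hy⟩ | ⟨hy', hy⟩ | hy <;>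
      rw [hx, hy]
    · exact absurd (hx'.trans hy'.symm) hxy.ne
    · exfalso; rw [hx', hy'] at hxy; exact h1 hxy.symm
    · exfalso; rw [hx', hy'] at hxy; exact h2 hxy
    · exact ⟨by norm_num, fun h => absurd h (by norm_num)⟩
    · exfalso; rw [hx', hy'] at hxy; exact h1 hxy
    · exact absurd (hx'.trans hy'.symm) hxy.ne
    · exact ⟨by norm_num, fun _ => by rw [hx', hy']⟩
    · exact ⟨by norm_num, fun h => absurd h (by norm_num)⟩
    · exfalso; rw [hx', hy'] at hxy; exact h2 hxy.symm
    · exact ⟨by norm_num, fun _ => by rw [hx', hy', Set.pair_comm]⟩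
    · exact absurd (hx'.trans hy'.symm) hxy.ne
    · exact ⟨by norm_num, fun h => absurd h (by norm_num)⟩
    · exact ⟨by norm_num, fun h => absurd h (by norm_num)⟩
    · exact ⟨by norm_num, fun h => absurd h (by norm_num)⟩
    · exact ⟨by norm_num, fun h => absurd h (by norm_num)⟩
    · exact ⟨by norm_num, fun h => absurd h (by norm_num)⟩
  apply adj_of_expose G f 2 (Or.inr (Or.inl ⟨v, rfl⟩)) (Or.inr (Or.inr ⟨u, w, huw, rfl⟩))
  · exact chi_ne v rfl (by simp [hvu, hvw])
  · rintro x (rfl | ⟨y, rfl⟩ | ⟨x, y, hxy, rfl⟩)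
    · rw [lfun_chi_empty]; norm_num
    · rw [lfun_chi_single]; exact fle y
    · rw [lfun_chi_pair _ hxy.ne]; exact (hedge x y hxy).1
  · rintro x (rfl | ⟨y, rfl⟩ | ⟨x, y, hxy, rfl⟩) h
    · rw [lfun_chi_empty] at h; norm_num at h
    · rw [lfun_chi_single] at h
      rcases fcases y with ⟨hy', hy⟩ | ⟨hy', hy⟩ | ⟨hy', hy⟩ | hy
      · exact Or.inl (by rw [hy'])
      · rw [hy] at h; norm_num at h
      · rw [hy] at h; norm_num at h
      · rw [hy] at h; norm_num at h
    · rw [lfun_chi_pair _ hxy.ne] at h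
      exact Or.inr ((hedge x y hxy).2 h)
  · rw [lfun_chi_single, fv]
  · rw [lfun_chi_pair _ huw', fu, fw]; norm_num

lemma L_share (G : SimpleGraph V) {u a b : V} (hua : G.Adj u a) (hub : G.Adj u b)
    (hab : a ≠ b) :
    AdjVert (poly G) (chi ({u, a} : Set V)) (chi ({u, b} : Set V)) := by
  have hua' : u ≠ a := hua.ne
  have hub' : u ≠ b := hub.ne
  set f : V → ℝ := fun t => if t = u then 3 else if t = a then 1 else if t = b then 1 else -9
    with hf
  have fU : f u = 3 := by rw [hf]; simp
  have fa : f a = 1 := by rw [hf]; simp [hua'.symm]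
  have fb : f b = 1 := by rw [hf]; simp [hub'.symm, hab.symm]
  have fo : ∀ t, t ≠ u → t ≠ a → t ≠ b → f t = -9 := fun t x y z => by
    rw [hf]; simp [x, y, z]
  have fle : ∀ t, f t ≤ 3 := by
    intro t; rw [hf]; dsimp only; split_ifs <;> norm_num
  have fcases : ∀ t, (t = u ∧ f t = 3) ∨ (t = a ∧ f t = 1) ∨ (t = b ∧ f t = 1) ∨ f t = -9 := by
    intro t
    rcases eq_or_ne t u with h | x
    · exact Or.inl ⟨h, h ▸ fU⟩
    rcases eq_or_ne t a with h | y
    · exact Or.inr (Or.inl ⟨h, h ▸ fa⟩)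
    rcases eq_or_ne t b with h | z
    · exact Or.inr (Or.inr (Or.inl ⟨h, h ▸ fb⟩))
    · exact Or.inr (Or.inr (Or.inr (fo t x y z)))
  have hedge : ∀ x y, G.Adj x y → f x + f y ≤ 4 ∧
      (f x + f y = 4 →
        chi ({x, y} : Set V) = chi ({u, a} : Set V) ∨
        chi ({x, y} : Set V) = chi ({u, b} : Set V)) := by
    intro x y hxy
    rcases fcases x with ⟨hx', hx⟩ | ⟨hx', hx⟩ | ⟨hx', hx⟩ | hx <;>
      rcases fcases y with ⟨hy', hy⟩ | ⟨hy', hy⟩ | ⟨hy', hy⟩ | hy <;>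
      rw [hx, hy]
    · exact absurd (hx'.trans hy'.symm) hxy.ne
    · exact ⟨by norm_num, fun _ => Or.inl (by rw [hx', hy'])⟩
    · exact ⟨by norm_num, fun _ => Or.inr (by rw [hx', hy'])⟩
    · exact ⟨by norm_num, fun h => absurd h (by norm_num)⟩
    · exact ⟨by norm_num, fun _ => Or.inl (by rw [hx', hy', Set.pair_comm])⟩
    · exact absurd (hx'.trans hy'.symm) hxy.ne
    · exact ⟨by norm_num, fun h => absurd h (by norm_num)⟩
    · exact ⟨by norm_num, fun h => absurd h (by norm_num)⟩
    · exact ⟨by norm_num, fun _ => Or.inr (by rw [hx', hy', Set.pair_comm])⟩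
    · exact ⟨by norm_num, fun h => absurd h (by norm_num)⟩
    · exact absurd (hx'.trans hy'.symm) hxy.ne
    · exact ⟨by norm_num, fun h => absurd h (by norm_num)⟩
    · exact ⟨by norm_num, fun h => absurd h (by norm_num)⟩
    · exact ⟨by norm_num, fun h => absurd h (by norm_num)⟩
    · exact ⟨by norm_num, fun h => absurd h (by norm_num)⟩
    · exact ⟨by norm_num, fun h => absurd h (by norm_num)⟩
  apply adj_of_expose G f 4 (Or.inr (Or.inr ⟨u, a, hua, rfl⟩)) (Or.inr (Or.inr ⟨u, b, hub, rfl⟩))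
  · exact chi_ne a (by simp) (by simp [hua'.symm, hab])
  · rintro x (rfl | ⟨y, rfl⟩ | ⟨x, y, hxy, rfl⟩)
    · rw [lfun_chi_empty]; norm_num
    · rw [lfun_chi_single]; linarith [fle y]
    · rw [lfun_chi_pair _ hxy.ne]; exact (hedge x y hxy).1
  · rintro x (rfl | ⟨y, rfl⟩ | ⟨x, y, hxy, rfl⟩) h
    · rw [lfun_chi_empty] at h; norm_num at h
    · rw [lfun_chi_single] at h; linarith [fle y]
    · rw [lfun_chi_pair _ hxy.ne] at h
      exact (hedge x y hxy).2 h
  · rw [lfun_chi_pair _ hua', fU, fa]; norm_num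
  · rw [lfun_chi_pair _ hub', fU, fb]; norm_num

lemma L_disjoint (G : SimpleGraph V) {a b c d : V} (hab : G.Adj a b) (hcd : G.Adj c d)
    (hac : a ≠ c) (had : a ≠ d) (hbc : b ≠ c) (hbd : b ≠ d)
    (h1 : ¬(G.Adj a c ∧ G.Adj b d)) (h2 : ¬(G.Adj a d ∧ G.Adj b c)) :
    AdjVert (poly G) (chi ({a, b} : Set V)) (chi ({c, d} : Set V)) := by
  set s1 : ℝ := if G.Adj a c then 1 else if G.Adj b d then -1 else 0 with hs1
  set s2 : ℝ := if G.Adj a d then 1 else if G.Adj b c then -1 else 0 with hs2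
  have hs1ac : G.Adj a c → s1 = 1 := fun h => by rw [hs1, if_pos h]
  have hs1bd : G.Adj b d → s1 = -1 := fun h => by
    rw [hs1, if_neg (fun h' => h1 ⟨h', h⟩), if_pos h]
  have hs2ad : G.Adj a d → s2 = 1 := fun h => by rw [hs2, if_pos h]
  have hs2bc : G.Adj b c → s2 = -1 := fun h => by
    rw [hs2, if_neg (fun h' => h2 ⟨h', h⟩), if_pos h]
  have hs1b : -1 ≤ s1 ∧ s1 ≤ 1 := by
    rw [hs1]; constructor <;> (split_ifs <;> norm_num)
  have hs2b : -1 ≤ s2 ∧ s2 ≤ 1 := by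
    rw [hs2]; constructor <;> (split_ifs <;> norm_num)
  obtain ⟨hs1l, hs1u⟩ := hs1b
  obtain ⟨hs2l, hs2u⟩ := hs2b
  set f : V → ℝ := fun t => if t = a then 2 - (s1 + s2)/2 else if t = b then 2 + (s1 + s2)/2
    else if t = c then 2 - (s1 - s2)/2 else if t = d then 2 + (s1 - s2)/2 else -9 with hf
  have fA : f a = 2 - (s1 + s2)/2 := by rw [hf]; simp
  have fB : f b = 2 + (s1 + s2)/2 := by rw [hf]; simp [hab.ne']
  have fC : f c = 2 - (s1 - s2)/2 := by rw [hf]; simp [hac.symm, hbc.symm]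
  have fD : f d = 2 + (s1 - s2)/2 := by rw [hf]; simp [had.symm, hbd.symm, hcd.ne']
  have fle : ∀ t, f t ≤ 3 := by
    intro t; rw [hf]; dsimp only; split_ifs <;> linarith
  have fcases : ∀ t, (t = a ∧ f t = 2 - (s1 + s2)/2) ∨ (t = b ∧ f t = 2 + (s1 + s2)/2) ∨
      (t = c ∧ f t = 2 - (s1 - s2)/2) ∨ (t = d ∧ f t = 2 + (s1 - s2)/2) ∨ f t = -9 := by
    intro t
    rcases eq_or_ne t a with h | xa
    · exact Or.inl ⟨h, h ▸ fA⟩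
    rcases eq_or_ne t b with h | xb
    · exact Or.inr (Or.inl ⟨h, h ▸ fB⟩)
    rcases eq_or_ne t c with h | xc
    · exact Or.inr (Or.inr (Or.inl ⟨h, h ▸ fC⟩))
    rcases eq_or_ne t d with h | xd
    · exact Or.inr (Or.inr (Or.inr (Or.inl ⟨h, h ▸ fD⟩)))
    · refine Or.inr (Or.inr (Or.inr (Or.inr ?_)))
      rw [hf]; simp [xa, xb, xc, xd]
  have hedge : ∀ x y, G.Adj x y → f x + f y ≤ 4 ∧
      (f x + f y = 4 →
        chi ({x, y} : Set V) = chi ({a, b} : Set V) ∨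
        chi ({x, y} : Set V) = chi ({c, d} : Set V)) := by
    intro x y hxy
    rcases fcases x with ⟨hx', hx⟩ | ⟨hx', hx⟩ | ⟨hx', hx⟩ | ⟨hx', hx⟩ | hx <;>
      rcases fcases y with ⟨hy', hy⟩ | ⟨hy', hy⟩ | ⟨hy', hy⟩ | ⟨hy', hy⟩ | hy <;>
      rw [hx, hy]
    -- x = a
    · exact absurd (hx'.trans hy'.symm) hxy.ne
    · exact ⟨by linarith, fun _ => Or.inl (by rw [hx', hy'])⟩
    · rw [hx', hy'] at hxy
      have e := hs1ac hxy
      exact ⟨by linarith, fun h => by linarith⟩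
    · rw [hx', hy'] at hxy
      have e := hs2ad hxy
      exact ⟨by linarith, fun h => by linarith⟩
    · exact ⟨by linarith, fun h => by linarith⟩
    -- x = b
    · exact ⟨by linarith, fun _ => Or.inl (by rw [hx', hy', Set.pair_comm])⟩
    · exact absurd (hx'.trans hy'.symm) hxy.ne
    · rw [hx', hy'] at hxy
      have e := hs2bc hxy
      exact ⟨by linarith, fun h => by linarith⟩
    · rw [hx', hy'] at hxy
      have e := hs1bd hxy
      exact ⟨by linarith, fun h => by linarith⟩
    · exact ⟨by linarith, fun h => by linarith⟩
    -- x = c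
    · rw [hx', hy'] at hxy
      have e := hs1ac hxy.symm
      exact ⟨by linarith, fun h => by linarith⟩
    · rw [hx', hy'] at hxy
      have e := hs2bc hxy.symm
      exact ⟨by linarith, fun h => by linarith⟩
    · exact absurd (hx'.trans hy'.symm) hxy.ne
    · exact ⟨by linarith, fun _ => Or.inr (by rw [hx', hy'])⟩
    · exact ⟨by linarith, fun h => by linarith⟩
    -- x = d
    · rw [hx', hy'] at hxy
      have e := hs2ad hxy.symm
      exact ⟨by linarith, fun h => by linarith⟩
    · rw [hx', hy'] at hxy
      have e := hs1bd hxy.symm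
      exact ⟨by linarith, fun h => by linarith⟩
    · exact ⟨by linarith, fun _ => Or.inr (by rw [hx', hy', Set.pair_comm])⟩
    · exact absurd (hx'.trans hy'.symm) hxy.ne
    · exact ⟨by linarith, fun h => by linarith⟩
    -- x outside
    · exact ⟨by linarith, fun h => by linarith⟩
    · exact ⟨by linarith, fun h => by linarith⟩
    · exact ⟨by linarith, fun h => by linarith⟩
    · exact ⟨by linarith, fun h => by linarith⟩
    · exact ⟨by linarith, fun h => by linarith⟩
  apply adj_of_expose G f 4 (Or.inr (Or.inr ⟨a, b, hab, rfl⟩)) (Or.inr (Or.inr ⟨c, d, hcd, rfl⟩))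
  · exact chi_ne a (by simp) (by simp [hac, had])
  · rintro x (rfl | ⟨y, rfl⟩ | ⟨x, y, hxy, rfl⟩)
    · rw [lfun_chi_empty]; norm_num
    · rw [lfun_chi_single]; linarith [fle y]
    · rw [lfun_chi_pair _ hxy.ne]; exact (hedge x y hxy).1
  · rintro x (rfl | ⟨y, rfl⟩ | ⟨x, y, hxy, rfl⟩) h
    · rw [lfun_chi_empty] at h; norm_num at h
    · rw [lfun_chi_single] at h; linarith [fle y]
    · rw [lfun_chi_pair _ hxy.ne] at h
      exact (hedge x y hxy).2 h
  · rw [lfun_chi_pair _ hab.ne, fA, fB]; ring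
  · rw [lfun_chi_pair _ hcd.ne, fC, fD]; ring

lemma case_empty_edge (G : SimpleGraph V) {u w : V} (huw : G.Adj u w) :
    ∃ r ∈ polyVerts G, ∃ s ∈ polyVerts G, r ≠ chi (∅ : Set V) ∧ r ≠ chi ({u, w} : Set V) ∧
      s ≠ chi (∅ : Set V) ∧ s ≠ chi ({u, w} : Set V) ∧
      chi (∅ : Set V) + chi ({u, w} : Set V) = r + s := by
  refine ⟨chi {u}, Or.inr (Or.inl ⟨u, rfl⟩), chi {w}, Or.inr (Or.inl ⟨w, rfl⟩),
    ?_, ?_, ?_, ?_, ?_⟩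
  · exact chi_ne u rfl (notMem_empty u)
  · exact (chi_ne w (by simp) (by simp [huw.ne'])).symm
  · exact chi_ne w rfl (notMem_empty w)
  · exact (chi_ne u (by simp) (by simp [huw.ne])).symm
  · rw [chi_empty, zero_add, chi_pair_add huw.ne]

lemma case_single_edge (G : SimpleGraph V) {v u w : V} (huw : G.Adj u w)
    (hnadj : ¬ AdjVert (poly G) (chi ({v} : Set V)) (chi ({u, w} : Set V))) :
    ∃ r ∈ polyVerts G, ∃ s ∈ polyVerts G, r ≠ chi ({v} : Set V) ∧ r ≠ chi ({u, w} : Set V) ∧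
      s ≠ chi ({v} : Set V) ∧ s ≠ chi ({u, w} : Set V) ∧
      chi ({v} : Set V) + chi ({u, w} : Set V) = r + s := by
  rcases eq_or_ne v u with hvu | hvu
  · exfalso; apply hnadj; rw [hvu]
    exact L_single_inedge G huw
  rcases eq_or_ne v w with hvw | hvw
  · exfalso; apply hnadj; rw [hvw, Set.pair_comm u w]
    exact L_single_inedge G huw.symm
  by_cases hEvw : G.Adj v w
  · refine ⟨chi {u}, Or.inr (Or.inl ⟨u, rfl⟩), chi {v, w}, Or.inr (Or.inr ⟨v, w, hEvw, rfl⟩),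
      ?_, ?_, ?_, ?_, ?_⟩
    · exact chi_ne u rfl (by simp [Ne.symm hvu])
    · exact (chi_ne w (by simp) (by simp [huw.ne'])).symm
    · exact chi_ne w (by simp) (by simp [Ne.symm hvw])
    · exact chi_ne v (by simp) (by simp [hvu, hvw])
    · rw [chi_pair_add huw.ne, chi_pair_add hEvw.ne]; abel
  by_cases hEuv : G.Adj u v
  · refine ⟨chi {w}, Or.inr (Or.inl ⟨w, rfl⟩), chi {u, v}, Or.inr (Or.inr ⟨u, v, hEuv, rfl⟩),
      ?_, ?_, ?_, ?_, ?_⟩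
    · exact chi_ne w rfl (by simp [Ne.symm hvw])
    · exact (chi_ne u (by simp) (by simp [huw.ne])).symm
    · exact chi_ne u (by simp) (by simp [Ne.symm hvu])
    · exact chi_ne v (by simp) (by simp [hvu, hvw])
    · rw [chi_pair_add huw.ne, chi_pair_add hEuv.ne]; abel
  · exact absurd (L_single_offedge G huw hvu hvw hEuv hEvw) hnadj

lemma case_edge_edge (G : SimpleGraph V) {u w a b : V} (huw : G.Adj u w) (hab : G.Adj a b)
    (hne : chi ({u, w} : Set V) ≠ chi ({a, b} : Set V))
    (hnadj : ¬ AdjVert (poly G) (chi ({u, w} : Set V)) (chi ({a, b} : Set V))) :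
    ∃ r ∈ polyVerts G, ∃ s ∈ polyVerts G, r ≠ chi ({u, w} : Set V) ∧ r ≠ chi ({a, b} : Set V) ∧
      s ≠ chi ({u, w} : Set V) ∧ s ≠ chi ({a, b} : Set V) ∧
      chi ({u, w} : Set V) + chi ({a, b} : Set V) = r + s := by
  rcases eq_or_ne u a with hua | hua
  · rcases eq_or_ne w b with hwb | hwb
    · exact absurd (by rw [hua, hwb]) hne
    · exfalso; apply hnadj; rw [hua]
      exact L_share G (hua ▸ huw) hab hwb
  rcases eq_or_ne u b with hub | hub
  · rcases eq_or_ne w a with hwa | hwa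
    · exact absurd (by rw [hub, hwa, Set.pair_comm]) hne
    · exfalso; apply hnadj; rw [hub, Set.pair_comm a b]
      exact L_share G (hub ▸ huw) hab.symm hwa
  rcases eq_or_ne w a with hwa | hwa
  · exfalso; apply hnadj; rw [Set.pair_comm u w, hwa]
    exact L_share G (hwa ▸ huw.symm) hab hub
  rcases eq_or_ne w b with hwb | hwb
  · exfalso; apply hnadj; rw [Set.pair_comm u w, hwb, Set.pair_comm a b]
    exact L_share G (hwb ▸ huw.symm) hab.symm hua
  by_cases hX : G.Adj u a ∧ G.Adj w b
  · refine ⟨chi {u, a}, Or.inr (Or.inr ⟨u, a, hX.1, rfl⟩),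
      chi {w, b}, Or.inr (Or.inr ⟨w, b, hX.2, rfl⟩), ?_, ?_, ?_, ?_, ?_⟩
    · exact chi_ne a (by simp) (by simp [Ne.symm hua, Ne.symm hwa])
    · exact chi_ne u (by simp) (by simp [hua, hub])
    · exact chi_ne b (by simp) (by simp [Ne.symm hub, Ne.symm hwb])
    · exact chi_ne w (by simp) (by simp [hwa, hwb])
    · rw [chi_pair_add huw.ne, chi_pair_add hab.ne, chi_pair_add hX.1.ne,
        chi_pair_add hX.2.ne]
      abel
  by_cases hY : G.Adj u b ∧ G.Adj w a
  · refine ⟨chi {u, b}, Or.inr (Or.inr ⟨u, b, hY.1, rfl⟩),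
      chi {w, a}, Or.inr (Or.inr ⟨w, a, hY.2, rfl⟩), ?_, ?_, ?_, ?_, ?_⟩
    · exact chi_ne b (by simp) (by simp [Ne.symm hub, Ne.symm hwb])
    · exact chi_ne u (by simp) (by simp [hua, hub])
    · exact chi_ne a (by simp) (by simp [Ne.symm hua, Ne.symm hwa])
    · exact chi_ne w (by simp) (by simp [hwa, hwb])
    · rw [chi_pair_add huw.ne, chi_pair_add hab.ne, chi_pair_add hY.1.ne,
        chi_pair_add hY.2.ne]
      abel
  · exact absurd (L_disjoint G huw hab hua hub hwa hwb hX hY) hnadj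

lemma main_lemma (G : SimpleGraph V) {p q : V → ℝ} (hp : p ∈ polyVerts G)
    (hq : q ∈ polyVerts G) (hne : p ≠ q) (hnadj : ¬ AdjVert (poly G) p q) :
    ∃ r ∈ polyVerts G, ∃ s ∈ polyVerts G,
      r ≠ p ∧ r ≠ q ∧ s ≠ p ∧ s ≠ q ∧ p + q = r + s := by
  have swap : ∀ {p q : V → ℝ},
      (∃ r ∈ polyVerts G, ∃ s ∈ polyVerts G, r ≠ p ∧ r ≠ q ∧ s ≠ p ∧ s ≠ q ∧ p + q = r + s) →
      ∃ r ∈ polyVerts G, ∃ s ∈ polyVerts G, r ≠ q ∧ r ≠ p ∧ s ≠ q ∧ s ≠ p ∧ q + p = r + s := by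
    rintro p q ⟨r, hr, s, hs, h1, h2, h3, h4, h5⟩
    exact ⟨r, hr, s, hs, h2, h1, h4, h3, by rw [add_comm q p, h5]⟩
  rcases hp with rfl | ⟨v, rfl⟩ | ⟨u, w, huw, rfl⟩
  · rcases hq with rfl | ⟨v, rfl⟩ | ⟨u, w, huw, rfl⟩
    · exact absurd rfl hne
    · exact absurd (L_empty_single G v) hnadj
    · exact case_empty_edge G huw
  · rcases hq with rfl | ⟨v2, rfl⟩ | ⟨u, w, huw, rfl⟩
    · exact absurd (L_empty_single G v).symm' hnadj
    · have hvv : v ≠ v2 := fun h => hne (by rw [h])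
      by_cases hA : G.Adj v v2
      · refine ⟨chi ∅, Or.inl rfl, chi {v, v2}, Or.inr (Or.inr ⟨v, v2, hA, rfl⟩),
          ?_, ?_, ?_, ?_, ?_⟩
        · exact (chi_ne (S := ({v} : Set V)) v rfl (notMem_empty v)).symm
        · exact (chi_ne (S := ({v2} : Set V)) v2 rfl (notMem_empty v2)).symm
        · exact chi_ne v2 (by simp) (by simp [Ne.symm hvv])
        · exact chi_ne v (by simp) (by simp [hvv])
        · rw [chi_empty, zero_add, chi_pair_add hvv]
      · exact absurd (L_single_single G hvv hA) hnadj
    · exact case_single_edge G huw hnadj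
  · rcases hq with rfl | ⟨v, rfl⟩ | ⟨a, b, hab, rfl⟩
    · exact swap (case_empty_edge G huw)
    · exact swap (case_single_edge G huw (fun h => hnadj h.symm'))
    · exact case_edge_edge G huw hab hne hnadj

end Aux

theorem stmt8 [Fintype V] [Nonempty V] (G : SimpleGraph V) :
    (∀ p ∈ (poly G).extremePoints ℝ, ∀ i : V, p i = 0 ∨ p i = 1) ∧
    (∀ p ∈ (poly G).extremePoints ℝ, ∀ q ∈ (poly G).extremePoints ℝ,
      p ≠ q → ¬ AdjVert (poly G) p q →
        ∃ r ∈ (poly G).extremePoints ℝ, ∃ s ∈ (poly G).extremePoints ℝ,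
          r ≠ p ∧ r ≠ q ∧ s ≠ p ∧ s ≠ q ∧ p + q = r + s) := by
  constructor
  · intro p hp i
    rw [extremePoints_poly] at hp
    exact chi_mem_01 hp i
  · intro p hp q hq hne hnadj
    rw [extremePoints_poly] at hp hq
    obtain ⟨r, hr, s, hs, h⟩ := main_lemma G hp hq hne hnadj
    exact ⟨r, by rw [extremePoints_poly]; exact hr,
      s, by rw [extremePoints_poly]; exact hs, h⟩
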